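/- Let G be a context-free grammar in Chomsky normal form with terminals Γ generating a word a1⋯an with n ≥ 2, and let t be any 2-ary term over {a,c}. Then there exists an n-ary term s ∈ t* such that the tree s(a1,…,an) belongs to kop(G). -/

import Mathlib

inductive Term (σ : Type) : Type
  | port : Term σ
  | node : σ → List (Term σ) → Term σ

namespace Term

variable {σ : Type}

def ports : Term σ → ℕ
  | .port => 1
  | .node _ ts => (ts.attach.map fun x => ports x.1).sum
decreasing_by
  simp_wf
  have := List.sizeOf_lt_of_mem x.2
  omega

def size : Term σ → ℕ
  | .port => 1
  | .node _ ts => 1 + (ts.attach.map fun x => size x.1).sum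
decreasing_by
  simp_wf
  have := List.sizeOf_lt_of_mem x.2
  omega

def WF (ar : σ → ℕ) : Term σ → Prop
  | .port => True
  | .node a ts => ts.length = ar a ∧ ∀ t ∈ ts.attach, WF ar t.1
decreasing_by
  simp_wf
  have := List.sizeOf_lt_of_mem t.2
  omega

mutual
def subst1 : Term σ → List (Term σ) → Term σ × List (Term σ)
  | .port, l => (l.headD .port, l.tail)
  | .node a ts, l => let p := substL ts l; (.node a p.1, p.2)
def substL : List (Term σ) → List (Term σ) → List (Term σ) × List (Term σ)
  | [], l => ([], l)
  | t :: ts, l => let p := subst1 t l; let q := substL ts p.2; (p.1 :: q.1, q.2)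
end

/-- Substitute the terms `l` for the ports of `t`, in left-to-right order. -/
def subst (t : Term σ) (l : List (Term σ)) : Term σ := (subst1 t l).1

def eval {Q : Type} (δ : σ → List Q → Q) (q0 : Q) : Term σ → Q
  | .port => q0
  | .node a ts => δ a (ts.attach.map fun x => eval δ q0 x.1)
decreasing_by
  simp_wf
  have := List.sizeOf_lt_of_mem x.2
  omega

end Term

inductive TStar {σ : Type} (t : Term σ) : Term σ → Prop
  | base : TStar t Term.port
  | step {u v : Term σ} : TStar t u → TStar t v → TStar t (t.subst [u, v])

def LEquiv {σ : Type} (ar : σ → ℕ) (L : Set (Term σ)) (n : ℕ) (u u' : Term σ) : Prop :=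
  u.ports = n ∧ u'.ports = n ∧
  ∀ s : Term σ, s.ports = 1 → s.WF ar →
    ∀ l : List (Term σ), l.length = n → (∀ x ∈ l, x.ports = 0 ∧ x.WF ar) →
      (s.subst [u.subst l] ∈ L ↔ s.subst [u'.subst l] ∈ L)

def RegularTree {σ : Type} (ar : σ → ℕ) (L : Set (Term σ)) : Prop :=
  ∃ (Q : Type) (_ : Finite Q) (δ : σ → List Q → Q) (q0 : Q) (F : Set Q),
    L = {u | u.ports = 0 ∧ u.WF ar ∧ u.eval δ q0 ∈ F}

def RegularWord {Γ : Type} (K : Set (List Γ)) : Prop :=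
  ∃ (Q : Type) (_ : Fintype Q) (M : DFA Γ Q), K = M.accepts

/-- A context-free grammar in Chomsky normal form: rules `A → B C` and `A → σ`. -/
structure CNF (Γ N : Type) where
  start : N
  rule2 : N → N → N → Prop
  rule1 : N → Γ → Prop

/-- Derivation trees: internal nodes labeled by nonterminals, leaves by terminals. -/
inductive DTree (Γ N : Type) : Type
  | leaf : Γ → DTree Γ N
  | node : N → DTree Γ N → DTree Γ N → DTree Γ N

def DTree.yield {Γ N : Type} : DTree Γ N → List Γ
  | .leaf a => [a]
  | .node _ l r => l.yield ++ r.yield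

/-- `IsDeriv G d A`: `d` is a derivation tree of `G` from nonterminal `A`. -/
def IsDeriv {Γ N : Type} (G : CNF Γ N) : DTree Γ N → N → Prop
  | .leaf a, A => G.rule1 A a
  | .node B l r, A => B = A ∧ ∃ C D, G.rule2 A C D ∧ IsDeriv G l C ∧ IsDeriv G r D

/-- The word language generated by `G`. -/
def CNF.lang {Γ N : Type} (G : CNF Γ N) : Set (List Γ) :=
  {w | ∃ d : DTree Γ N, IsDeriv G d G.start ∧ d.yield = w}

/-- The ranked alphabet `Γ ∪ {a, c}`: `Sum.inr true` is the binary letter `a`,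
`Sum.inr false` is the nullary letter `c`, and letters of `Γ` have arity 0. -/
abbrev KLetter (Γ : Type) := Γ ⊕ Bool

def arK {Γ : Type} : KLetter Γ → ℕ
  | .inr true => 2
  | _ => 0

/-- All labels of the term are among `{a, c}`. -/
def OnlyAC {Γ : Type} : Term (KLetter Γ) → Prop
  | .port => True
  | .node x ts => (∃ b : Bool, x = .inr b) ∧ ∀ u ∈ ts.attach, OnlyAC u.1
decreasing_by
  simp_wf
  have := List.sizeOf_lt_of_mem u.2
  omega

def leafT {Γ : Type} (g : Γ) : Term (KLetter Γ) := .node (.inl g) []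

/-- `KopD d u`: `u` is obtained from the derivation tree `d` by replacing each
nonterminal occurrence by some 2-ary term over `{a, c}`. -/
inductive KopD {Γ N : Type} : DTree Γ N → Term (KLetter Γ) → Prop
  | leaf (g : Γ) : KopD (.leaf g) (leafT g)
  | node (A : N) (l r : DTree Γ N) (s u v : Term (KLetter Γ)) :
      s.ports = 2 → s.WF arK → OnlyAC s → KopD l u → KopD r v →
      KopD (.node A l r) (s.subst [u, v])

/-- The Kopczyński obfuscation of `G`. -/
def kopLang {Γ N : Type} (G : CNF Γ N) : Set (Term (KLetter Γ)) :=
  {u | ∃ d : DTree Γ N, IsDeriv G d G.start ∧ KopD d u}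

/-- The left-to-right word of `Γ`-labeled leaves of a tree over `Γ ∪ {a,c}`. -/
def gyield {Γ : Type} : Term (KLetter Γ) → List Γ
  | .port => []
  | .node (.inl g) _ => [g]
  | .node (.inr _) ts => (ts.attach.map fun x => gyield x.1).flatten
decreasing_by
  simp_wf
  have := List.sizeOf_lt_of_mem x.2
  omega

namespace Term

variable {σ : Type}

lemma ports_node (a : σ) (ts : List (Term σ)) :
    Term.ports (.node a ts) = (ts.map Term.ports).sum := by
  rw [Term.ports]; simp

lemma subst1_port (l : List (Term σ)) :
    Term.subst1 (.port : Term σ) l = (l.headD .port, l.tail) := by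
  rw [Term.subst1]

lemma subst1_node (a : σ) (ts l : List (Term σ)) :
    Term.subst1 (.node a ts) l = (.node a (Term.substL ts l).1, (Term.substL ts l).2) := by
  rw [Term.subst1]

lemma substL_nil (l : List (Term σ)) : Term.substL ([] : List (Term σ)) l = ([], l) := by
  rw [Term.substL]

lemma substL_cons (t : Term σ) (ts l : List (Term σ)) :
    Term.substL (t :: ts) l =
      ((Term.subst1 t l).1 :: (Term.substL ts (Term.subst1 t l).2).1,
       (Term.substL ts (Term.subst1 t l).2).2) := by
  rw [Term.substL]

mutual
theorem subst1_take : ∀ (t : Term σ) (l1 l2 : List (Term σ)), l1.length = t.ports →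
    Term.subst1 t (l1 ++ l2) = ((Term.subst1 t l1).1, l2)
  | .port, l1, l2, h => by
      rw [Term.ports] at h
      rw [List.length_eq_one_iff] at h
      obtain ⟨x, rfl⟩ := h
      simp [subst1_port]
  | .node a ts, l1, l2, h => by
      rw [ports_node] at h
      rw [subst1_node, subst1_node, substL_take ts l1 l2 h]
termination_by t l1 l2 h => sizeOf t

theorem substL_take : ∀ (ts l1 l2 : List (Term σ)), l1.length = (ts.map Term.ports).sum →
    Term.substL ts (l1 ++ l2) = ((Term.substL ts l1).1, l2)
  | [], l1, l2, h => by
      simp only [List.map_nil, List.sum_nil, List.length_eq_zero_iff] at h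
      subst h
      simp [substL_nil]
  | t :: ts, l1, l2, h => by
      simp only [List.map_cons, List.sum_cons] at h
      obtain ⟨A, B, rfl, hA, hB⟩ :
          ∃ A B : List (Term σ), l1 = A ++ B ∧ A.length = t.ports
            ∧ B.length = (ts.map Term.ports).sum :=
        ⟨l1.take t.ports, l1.drop t.ports, (List.take_append_drop _ _).symm,
          by rw [List.length_take]; omega, by rw [List.length_drop]; omega⟩
      rw [List.append_assoc, substL_cons, substL_cons,
        subst1_take t A _ hA, subst1_take t A B hA]
      simp only
      rw [substL_take ts B l2 hB]
termination_by ts l1 l2 h => sizeOf ts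
end

theorem substL_length (ts l : List (Term σ)) : (Term.substL ts l).1.length = ts.length := by
  induction ts generalizing l with
  | nil => rw [substL_nil]
  | cons t ts ih => rw [substL_cons]; simp [ih]

mutual
theorem subst1_ports : ∀ (t : Term σ) (l : List (Term σ)), l.length = t.ports →
    ((Term.subst1 t l).1).ports = (l.map Term.ports).sum
  | .port, l, h => by
      rw [Term.ports] at h
      rw [List.length_eq_one_iff] at h
      obtain ⟨x, rfl⟩ := h
      simp [subst1_port]
  | .node a ts, l, h => by
      rw [ports_node] at h
      rw [subst1_node]
      simp only
      rw [ports_node]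
      exact substL_ports ts l h
termination_by t l h => sizeOf t

theorem substL_ports : ∀ (ts l : List (Term σ)), l.length = (ts.map Term.ports).sum →
    ((Term.substL ts l).1.map Term.ports).sum = (l.map Term.ports).sum
  | [], l, h => by
      simp only [List.map_nil, List.sum_nil, List.length_eq_zero_iff] at h
      subst h
      rw [substL_nil]
  | t :: ts, l, h => by
      simp only [List.map_cons, List.sum_cons] at h
      obtain ⟨A, B, rfl, hA, hB⟩ :
          ∃ A B : List (Term σ), l = A ++ B ∧ A.length = t.ports
            ∧ B.length = (ts.map Term.ports).sum :=
        ⟨l.take t.ports, l.drop t.ports, (List.take_append_drop _ _).symm,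
          by rw [List.length_take]; omega, by rw [List.length_drop]; omega⟩
      rw [substL_cons, subst1_take t A B hA]
      simp only [List.map_cons, List.sum_cons, List.map_append, List.sum_append]
      rw [subst1_ports t A hA, substL_ports ts B hB]
termination_by ts l h => sizeOf ts
end

theorem substL_append (l1 l2 m : List (Term σ)) :
    Term.substL (l1 ++ l2) m =
      ((Term.substL l1 m).1 ++ (Term.substL l2 (Term.substL l1 m).2).1,
       (Term.substL l2 (Term.substL l1 m).2).2) := by
  induction l1 generalizing m with
  | nil => rw [substL_nil]; simp
  | cons t ts ih =>
      rw [List.cons_append, substL_cons, substL_cons, ih]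
      simp

mutual
theorem subst1_comp : ∀ (t : Term σ) (l m : List (Term σ)), l.length = t.ports →
    Term.subst1 (Term.subst1 t l).1 m
      = ((Term.subst1 t (Term.substL l m).1).1, (Term.substL l m).2)
  | .port, l, m, h => by
      rw [Term.ports] at h
      rw [List.length_eq_one_iff] at h
      obtain ⟨x, rfl⟩ := h
      simp [subst1_port, substL_cons, substL_nil]
  | .node a ts, l, m, h => by
      rw [ports_node] at h
      simp only [subst1_node, substL_comp ts l m h]
termination_by t l m h => sizeOf t

theorem substL_comp : ∀ (ts l m : List (Term σ)), l.length = (ts.map Term.ports).sum →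
    Term.substL (Term.substL ts l).1 m
      = ((Term.substL ts (Term.substL l m).1).1, (Term.substL l m).2)
  | [], l, m, h => by
      simp only [List.map_nil, List.sum_nil, List.length_eq_zero_iff] at h
      subst h
      simp [substL_nil]
  | t :: ts, l, m, h => by
      simp only [List.map_cons, List.sum_cons] at h
      obtain ⟨A, B, rfl, hA, hB⟩ :
          ∃ A B : List (Term σ), l = A ++ B ∧ A.length = t.ports
            ∧ B.length = (ts.map Term.ports).sum :=
        ⟨l.take t.ports, l.drop t.ports, (List.take_append_drop _ _).symm,
          by rw [List.length_take]; omega, by rw [List.length_drop]; omega⟩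
      rw [substL_append A B m]
      have hA' : (Term.substL A m).1.length = t.ports := by rw [substL_length]; exact hA
      have h1 := subst1_take t A B hA
      have h2 := subst1_comp t A m hA
      have h3 := substL_comp ts B (Term.substL A m).2 hB
      have h4 := subst1_take t (Term.substL A m).1 (Term.substL B (Term.substL A m).2).1 hA'
      simp only [substL_cons, h1, h2, h3, h4]
termination_by ts l m h => sizeOf ts
end

end Term

lemma leafT_ports {Γ : Type} (g : Γ) : (leafT g).ports = 0 := by
  rw [leafT, Term.ports_node]; simp

theorem kop_key {Γ N : Type} (G : CNF Γ N) (t : Term (KLetter Γ)) (ht : t.ports = 2)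
    (htwf : t.WF arK) (hac : OnlyAC t) :
    ∀ (d : DTree Γ N) (A : N), IsDeriv G d A →
      ∃ s : Term (KLetter Γ), TStar t s ∧ s.ports = d.yield.length ∧
        KopD d (s.subst (d.yield.map leafT)) := by
  intro d
  induction d with
  | leaf g =>
      intro A hA
      refine ⟨.port, TStar.base, by rw [Term.ports]; simp [DTree.yield], ?_⟩
      have : Term.subst (.port) ((DTree.yield (.leaf g : DTree Γ N)).map leafT) = leafT g := by
        rw [Term.subst, Term.subst1_port]
        simp [DTree.yield]
      rw [this]
      exact KopD.leaf g
  | node A dl dr ihl ihr =>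
      intro A' hA'
      obtain ⟨rfl, C, D, -, hC, hD⟩ := hA'
      obtain ⟨s1, hs1, hp1, hk1⟩ := ihl C hC
      obtain ⟨s2, hs2, hp2, hk2⟩ := ihr D hD
      refine ⟨t.subst [s1, s2], TStar.step hs1 hs2, ?_, ?_⟩
      · rw [Term.subst, Term.subst1_ports t [s1, s2] (by simp [ht])]
        simp [hp1, hp2, DTree.yield]
      · -- the substitution identity
        set ml := dl.yield.map leafT with hml
        set mr := dr.yield.map leafT with hmr
        have hyield : (DTree.yield (.node A dl dr : DTree Γ N)).map leafT = ml ++ mr := by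
          simp [DTree.yield, hml, hmr]
        have hlen : ([s1, s2] : List (Term (KLetter Γ))).length = t.ports := by simp [ht]
        have hmla : ml.length = s1.ports := by simp [hml, hp1]
        have key : (t.subst [s1, s2]).subst (ml ++ mr)
            = t.subst [s1.subst ml, s2.subst mr] := by
          rw [Term.subst, Term.subst, Term.subst,
            Term.subst1_comp t [s1, s2] (ml ++ mr) hlen]
          have e1 : Term.subst1 s1 (ml ++ mr) = ((Term.subst1 s1 ml).1, mr) :=
            Term.subst1_take s1 ml mr hmla
          simp only [Term.substL_cons, Term.substL_nil, e1]
          rfl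
        rw [hyield, key]
        exact KopD.node A dl dr t _ _ ht htwf hac hk1 hk2


/-- If `G` generates `a₁⋯aₙ` with `n ≥ 2` and `t` is a 2-ary term over `{a,c}`, then
there is an `n`-ary term `s ∈ t*` with `s(a₁,…,aₙ) ∈ kop(G)`. -/
theorem kop_contains_tstar_term {Γ N : Type} (G : CNF Γ N) (w : List Γ)
    (hw : w ∈ G.lang) (h2 : 2 ≤ w.length)
    (t : Term (KLetter Γ)) (ht : t.ports = 2) (htwf : t.WF arK) (hac : OnlyAC t) :
    ∃ s : Term (KLetter Γ), TStar t s ∧ s.ports = w.length ∧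
      s.subst (w.map leafT) ∈ kopLang G := by
  obtain ⟨d, hd, rfl⟩ := hw
  obtain ⟨s, hst, hp, hk⟩ := kop_key G t ht htwf hac d G.start hd
  exact ⟨s, hst, hp, ⟨d, hd, hk⟩⟩
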